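/- arXiv:math/0212265 — 3 statements merged into one kernel-verified Lean document; each statement's English description precedes it below -/
import Mathlib

section
/- Let a₁,…,a_r be self-adjoint m×m complex matrices and w₁,…,w_r be n×n complex matrices. Then ‖Σᵢ aᵢ ⊗ wᵢ‖₂ ≤ m^{1/2} · ‖Σᵢ aᵢ²‖^{1/2} · (Σᵢ ‖wᵢ‖₂²)^{1/2}, where ‖·‖₂ denotes the Hilbert–Schmidt norm with respect to the unnormalized traces and ‖Σᵢ aᵢ²‖ is the operator norm. -/
open scoped Kronecker

/-- The Hilbert–Schmidt norm `‖T‖₂ = (Tr(T*T))^{1/2}` of a complex matrix, with respect to the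
unnormalized trace. -/
noncomputable def hsNorm {K : Type*} [Fintype K] (T : Matrix K K ℂ) : ℝ :=
  Real.sqrt (Matrix.trace (T.conjTranspose * T)).re

lemma hsNorm_aux {K : Type*} [Fintype K] (T : Matrix K K ℂ) :
    (Matrix.trace (T.conjTranspose * T)).re = ∑ k, ∑ l, Complex.normSq (T l k) := by
  simp [Matrix.trace, Matrix.mul_apply, Matrix.diag, Complex.re_sum,
    Matrix.conjTranspose_apply, ← Complex.normSq_eq_conj_mul_self]

lemma eucl_coord_le (m : ℕ) (v : EuclideanSpace ℂ (Fin m)) (p : Fin m) : ‖v p‖ ≤ ‖v‖ := by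
  rw [EuclideanSpace.norm_eq]
  calc ‖v p‖ = Real.sqrt (‖v p‖^2) := by rw [Real.sqrt_sq (norm_nonneg _)]
  _ ≤ _ := by
      apply Real.sqrt_le_sqrt
      exact Finset.single_le_sum (f := fun i => ‖v i‖^2) (fun i _ => sq_nonneg _) (Finset.mem_univ p)

lemma trace_re_le (m : ℕ) (B : Matrix (Fin m) (Fin m) ℂ) :
    (Matrix.trace B).re ≤ m * ‖Matrix.toEuclideanCLM (𝕜 := ℂ) B‖ := by
  have h : ∀ p : Fin m, (B p p).re ≤ ‖Matrix.toEuclideanCLM (𝕜 := ℂ) B‖ := by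
    intro p
    set f := Matrix.toEuclideanCLM (𝕜 := ℂ) B with hf
    set x : EuclideanSpace ℂ (Fin m) := EuclideanSpace.single p 1 with hxdef
    have hval : (f x) p = B p p := by
      have := Matrix.ofLp_toEuclideanCLM (𝕜 := ℂ) B x
      have h2 : (f x) p = (Matrix.toLin' B (WithLp.equiv 2 _ x)) p := congrFun this p
      rw [h2, hxdef]
      simp [Matrix.toLin'_apply, PiLp.ofLp_single, Matrix.mulVec_single]
    have hx1 : ‖x‖ = 1 := by rw [hxdef, EuclideanSpace.norm_single]; simp
    calc (B p p).re ≤ ‖B p p‖ := Complex.re_le_norm _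
      _ = ‖(f x) p‖ := by rw [hval]
      _ ≤ ‖f x‖ := eucl_coord_le m _ p
      _ ≤ ‖f‖ * ‖x‖ := f.le_opNorm _
      _ = ‖f‖ := by rw [hx1, mul_one]
  calc (Matrix.trace B).re = ∑ p, (B p p).re := by
        simp [Matrix.trace, Matrix.diag, Complex.re_sum]
    _ ≤ ∑ _p : Fin m, ‖Matrix.toEuclideanCLM (𝕜 := ℂ) B‖ := Finset.sum_le_sum fun p _ => h p
    _ = m * _ := by rw [Finset.sum_const, Finset.card_univ, Fintype.card_fin, nsmul_eq_mul]

lemma cs_aux {r : ℕ} (u v : Fin r → ℂ) :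
    Complex.normSq (∑ i, u i * v i) ≤
      (∑ i, Complex.normSq (u i)) * (∑ i, Complex.normSq (v i)) := by
  have h1 : ‖∑ i, u i * v i‖ ≤ ∑ i, ‖u i‖ * ‖v i‖ :=
    (norm_sum_le _ _).trans (le_of_eq (by simp [norm_mul]))
  have h2 := Finset.sum_mul_sq_le_sq_mul_sq Finset.univ (fun i => ‖u i‖) (fun i => ‖v i‖)
  calc Complex.normSq (∑ i, u i * v i) = ‖∑ i, u i * v i‖ ^ 2 := by
        rw [Complex.normSq_eq_norm_sq]
    _ ≤ (∑ i, ‖u i‖ * ‖v i‖) ^ 2 := by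
        apply pow_le_pow_left₀ (norm_nonneg _) h1
    _ ≤ (∑ i, ‖u i‖ ^ 2) * (∑ i, ‖v i‖ ^ 2) := h2
    _ = _ := by
        simp [Complex.normSq_eq_norm_sq]

lemma swap3 {r : ℕ} {α β : Type*} [Fintype α] [Fintype β] (X : Fin r → α → β → ℝ) :
    (∑ k : β, ∑ l : α, ∑ i, X i l k) = ∑ i, ∑ l, ∑ k, X i l k :=
  calc (∑ k : β, ∑ l : α, ∑ i, X i l k) = ∑ k : β, ∑ i, ∑ l, X i l k :=
        Finset.sum_congr rfl fun _ _ => Finset.sum_comm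
    _ = ∑ i, ∑ k : β, ∑ l, X i l k := Finset.sum_comm
    _ = ∑ i, ∑ l, ∑ k, X i l k := Finset.sum_congr rfl fun _ _ => Finset.sum_comm

lemma key_ineq (m n r : ℕ)
    (a : Fin r → Matrix (Fin m) (Fin m) ℂ) (w : Fin r → Matrix (Fin n) (Fin n) ℂ) :
    (∑ k : Fin m × Fin n, ∑ l : Fin m × Fin n,
        Complex.normSq ((∑ i, a i ⊗ₖ w i) l k)) ≤
      (∑ i, ∑ p, ∑ p', Complex.normSq (a i p p')) *
        (∑ i, ∑ q, ∑ q', Complex.normSq (w i q q')) := by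
  have entry : ∀ (l k : Fin m × Fin n),
      (∑ i, a i ⊗ₖ w i) l k = ∑ i, a i l.1 k.1 * w i l.2 k.2 := by
    intro l k
    simp [Matrix.sum_apply, Matrix.kroneckerMap_apply]
  calc (∑ k : Fin m × Fin n, ∑ l : Fin m × Fin n, Complex.normSq ((∑ i, a i ⊗ₖ w i) l k))
      ≤ ∑ k : Fin m × Fin n, ∑ l : Fin m × Fin n,
          (∑ i, Complex.normSq (a i l.1 k.1)) * (∑ i, Complex.normSq (w i l.2 k.2)) := by
        refine Finset.sum_le_sum fun k _ => Finset.sum_le_sum fun l _ => ?_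
        rw [entry l k]
        exact cs_aux _ _
    _ = (∑ k1 : Fin m, ∑ l1 : Fin m, ∑ i, Complex.normSq (a i l1 k1)) *
          (∑ k2 : Fin n, ∑ l2 : Fin n, ∑ i, Complex.normSq (w i l2 k2)) := by
        have stepA : ∀ k : Fin m × Fin n,
            (∑ l : Fin m × Fin n,
              (∑ i, Complex.normSq (a i l.1 k.1)) * (∑ i, Complex.normSq (w i l.2 k.2))) =
            (∑ l1, ∑ i, Complex.normSq (a i l1 k.1)) *
              (∑ l2, ∑ i, Complex.normSq (w i l2 k.2)) := by
          intro k
          rw [Fintype.sum_prod_type, Fintype.sum_mul_sum]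
        calc ∑ k : Fin m × Fin n, ∑ l : Fin m × Fin n,
              (∑ i, Complex.normSq (a i l.1 k.1)) * (∑ i, Complex.normSq (w i l.2 k.2))
            = ∑ k : Fin m × Fin n, (∑ l1, ∑ i, Complex.normSq (a i l1 k.1)) *
              (∑ l2, ∑ i, Complex.normSq (w i l2 k.2)) :=
              Finset.sum_congr rfl fun k _ => stepA k
          _ = _ := by rw [Fintype.sum_prod_type, Fintype.sum_mul_sum]
    _ = _ := by
        rw [swap3 (fun i l k => Complex.normSq (a i l k)),
          swap3 (fun i l k => Complex.normSq (w i l k))]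

/-- For self-adjoint `m×m` matrices `a₁,…,a_r` and `n×n` matrices `w₁,…,w_r`,
`‖Σᵢ aᵢ ⊗ wᵢ‖₂ ≤ m^{1/2} ‖Σᵢ aᵢ²‖^{1/2} (Σᵢ ‖wᵢ‖₂²)^{1/2}`, where `‖·‖₂` is the
Hilbert–Schmidt norm (unnormalized traces) and `‖Σᵢ aᵢ²‖` the operator norm. -/
theorem stmt6 (m n r : ℕ)
    (a : Fin r → Matrix (Fin m) (Fin m) ℂ) (w : Fin r → Matrix (Fin n) (Fin n) ℂ)
    (ha : ∀ i, (a i).IsHermitian) :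
    hsNorm (∑ i, a i ⊗ₖ w i) ≤
      Real.sqrt m * Real.sqrt ‖Matrix.toEuclideanCLM (𝕜 := ℂ) (∑ i, a i * a i)‖ *
        Real.sqrt (∑ i, hsNorm (w i) ^ 2) := by
  set A : ℝ := ∑ i, ∑ p, ∑ p', Complex.normSq (a i p p') with hA
  set W : ℝ := ∑ i, ∑ q, ∑ q', Complex.normSq (w i q q') with hWdef
  have hAnn : 0 ≤ A := by
    refine Finset.sum_nonneg fun i _ => Finset.sum_nonneg fun p _ =>
      Finset.sum_nonneg fun p' _ => Complex.normSq_nonneg _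
  have hW : W = ∑ i, hsNorm (w i) ^ 2 := by
    refine Finset.sum_congr rfl fun i _ => ?_
    rw [hsNorm, Real.sq_sqrt, hsNorm_aux]
    · exact Finset.sum_comm
    · rw [hsNorm_aux]
      exact Finset.sum_nonneg fun k _ => Finset.sum_nonneg fun l _ => Complex.normSq_nonneg _
  have htr : (Matrix.trace (∑ i, a i * a i)).re = A := by
    rw [Matrix.trace_sum, Complex.re_sum, hA]
    refine Finset.sum_congr rfl fun i _ => ?_
    have : a i * a i = (a i).conjTranspose * a i := by rw [ha i]
    rw [this, hsNorm_aux]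
    exact Finset.sum_comm
  have hAle : A ≤ m * ‖Matrix.toEuclideanCLM (𝕜 := ℂ) (∑ i, a i * a i)‖ := by
    rw [← htr]; exact trace_re_le m _
  have h2 : Real.sqrt A ≤
      Real.sqrt m * Real.sqrt ‖Matrix.toEuclideanCLM (𝕜 := ℂ) (∑ i, a i * a i)‖ := by
    rw [← Real.sqrt_mul (Nat.cast_nonneg m)]
    exact Real.sqrt_le_sqrt hAle
  calc hsNorm (∑ i, a i ⊗ₖ w i)
      = Real.sqrt (∑ k, ∑ l, Complex.normSq ((∑ i, a i ⊗ₖ w i) l k)) := by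
        rw [hsNorm, hsNorm_aux]
    _ ≤ Real.sqrt (A * W) := Real.sqrt_le_sqrt (key_ineq m n r a w)
    _ = Real.sqrt A * Real.sqrt W := Real.sqrt_mul hAnn _
    _ ≤ (Real.sqrt m * Real.sqrt ‖Matrix.toEuclideanCLM (𝕜 := ℂ) (∑ i, a i * a i)‖) *
          Real.sqrt W := mul_le_mul_of_nonneg_right h2 (Real.sqrt_nonneg _)
    _ = _ := by rw [hW]
end

section
/- Let N be a positive integer, I an open real interval, a : I → M_N(ℂ) a C¹ function taking self-adjoint values, and φ ∈ C¹(ℝ). Then t ↦ tr_N[φ(a(t))] is C¹ on I and (d/dt) tr_N[φ(a(t))] = tr_N[φ'(a(t)) · a'(t)], where φ(a(t)) and φ'(a(t)) are defined by the continuous functional calculus and tr_N is the normalized trace. -/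
/-! ### Auxiliary results -/

section SpecBound
attribute [local instance] Matrix.linftyOpNormedRing Matrix.linftyOpNormedAlgebra

lemma eig_abs_le {N : ℕ} (A : Matrix (Fin N) (Fin N) ℂ) (hA : A.IsHermitian) (i : Fin N) :
    |hA.eigenvalues i| ≤ ∑ k : Fin N, ∑ l : Fin N, ‖A k l‖ := by
  haveI : Nonempty (Fin N) := ⟨i⟩
  haveI : FiniteDimensional ℝ (Matrix (Fin N) (Fin N) ℂ) := Module.Finite.trans ℂ _
  haveI : CompleteSpace (Matrix (Fin N) (Fin N) ℂ) := FiniteDimensional.complete ℝ _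
  have h1 : ‖hA.eigenvalues i‖ ≤ ‖A‖ :=
    spectrum.norm_le_norm_of_mem (hA.eigenvalues_mem_spectrum_real i)
  rw [Real.norm_eq_abs] at h1
  refine h1.trans ?_
  rw [Matrix.linfty_opNorm_def]
  have h2 : ∀ k : Fin N, ((∑ l : Fin N, ‖A k l‖₊ : NNReal) : ℝ)
      ≤ ∑ k : Fin N, ∑ l : Fin N, ‖A k l‖ := by
    intro k
    push_cast
    exact Finset.single_le_sum (f := fun k => ∑ l, ‖A k l‖)
      (fun _ _ => Finset.sum_nonneg fun _ _ => norm_nonneg _) (Finset.mem_univ k)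
  calc ((Finset.univ.sup fun k : Fin N => ∑ l : Fin N, ‖A k l‖₊ : NNReal) : ℝ)
      ≤ _ := by
        obtain ⟨k, -, hk⟩ := Finset.exists_mem_eq_sup Finset.univ Finset.univ_nonempty
          (fun k : Fin N => ∑ l : Fin N, ‖A k l‖₊)
        rw [hk]; exact h2 k

end SpecBound

open Matrix in
lemma unitary_entry_norm_le {N : ℕ} (U : Matrix.unitaryGroup (Fin N) ℂ) (k l : Fin N) :
    ‖(U : Matrix (Fin N) (Fin N) ℂ) k l‖ ≤ 1 := by
  have h : star (U : Matrix (Fin N) (Fin N) ℂ) * U = 1 := Unitary.coe_star_mul_self U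
  have h2 := congrFun (congrFun (congrArg (fun M : Matrix (Fin N) (Fin N) ℂ => M) h) l) l
  simp only [Matrix.mul_apply, Matrix.star_apply, Matrix.one_apply_eq] at h2
  have h3 : ∑ j : Fin N, (Complex.normSq ((U : Matrix (Fin N) (Fin N) ℂ) j l) : ℂ) = 1 := by
    rw [← h2]
    refine Finset.sum_congr rfl fun j _ => ?_
    rw [Complex.normSq_eq_conj_mul_self]
    rfl
  have h4 : ∑ j : Fin N, Complex.normSq ((U : Matrix (Fin N) (Fin N) ℂ) j l) = 1 := by
    exact_mod_cast h3
  have h5 : Complex.normSq ((U : Matrix (Fin N) (Fin N) ℂ) k l) ≤ 1 := by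
    rw [← h4]
    exact Finset.single_le_sum (f := fun j => Complex.normSq ((U : Matrix (Fin N) (Fin N) ℂ) j l))
      (fun j _ => Complex.normSq_nonneg _) (Finset.mem_univ k)
  rw [← Complex.sq_norm] at h5
  have h6 : ‖(U : Matrix (Fin N) (Fin N) ℂ) k l‖ ≤ 1 := by
    nlinarith [norm_nonneg ((U : Matrix (Fin N) (Fin N) ℂ) k l)]
  exact h6

open Matrix in
lemma trace_mul_diagonal' {N : ℕ} (M : Matrix (Fin N) (Fin N) ℂ) (d : Fin N → ℂ) :
    Matrix.trace (M * Matrix.diagonal d) = ∑ i, M i i * d i := by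
  simp [Matrix.trace, Matrix.diag, Matrix.mul_apply, Matrix.diagonal]

open Matrix in
lemma trace_hcfc_eq {N : ℕ} (A B : Matrix (Fin N) (Fin N) ℂ) (hA : A.IsHermitian) (f : ℝ → ℝ) :
    Matrix.trace (hA.cfc f * B) =
      ∑ i, (f (hA.eigenvalues i) : ℂ) *
        ((star (hA.eigenvectorUnitary : Matrix (Fin N) (Fin N) ℂ) * B
          * (hA.eigenvectorUnitary : Matrix (Fin N) (Fin N) ℂ)) i i) := by
  set U := (hA.eigenvectorUnitary : Matrix (Fin N) (Fin N) ℂ)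
  have : hA.cfc f * B = U * ((Matrix.diagonal (RCLike.ofReal ∘ f ∘ hA.eigenvalues)) * (star U * B)) := by
    rw [Matrix.IsHermitian.cfc, Unitary.conjStarAlgAut_apply]
    noncomm_ring
  rw [this, Matrix.trace_mul_comm, Matrix.mul_assoc, Matrix.trace_mul_comm, trace_mul_diagonal']
  refine Finset.sum_congr rfl fun i _ => ?_
  rw [mul_comm]
  rfl

open Matrix in
lemma trace_hcfc_bound {N : ℕ} (A B : Matrix (Fin N) (Fin N) ℂ) (hA : A.IsHermitian) (f : ℝ → ℝ)
    (ε : ℝ) (hf : ∀ i, |f (hA.eigenvalues i)| ≤ ε) :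
    ‖Matrix.trace (hA.cfc f * B)‖ ≤ N * ε * ∑ k, ∑ l, ‖B k l‖ := by
  classical
  set U := (hA.eigenvectorUnitary : Matrix (Fin N) (Fin N) ℂ) with hU
  set S := ∑ k, ∑ l, ‖B k l‖ with hS
  have hS0 : 0 ≤ S := Finset.sum_nonneg fun _ _ => Finset.sum_nonneg fun _ _ => norm_nonneg _
  have hUe : ∀ k l, ‖U k l‖ ≤ 1 := fun k l => unitary_entry_norm_le _ k l
  have hM : ∀ i, ‖(star U * B * U) i i‖ ≤ S := by
    intro i
    have h1 : ∀ l, ‖(star U * B) i l‖ ≤ ∑ k, ‖B k l‖ := by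
      intro l
      rw [Matrix.mul_apply]
      refine (norm_sum_le _ _).trans (Finset.sum_le_sum fun k _ => ?_)
      rw [norm_mul, Matrix.star_apply]
      calc ‖star (U k i)‖ * ‖B k l‖ ≤ 1 * ‖B k l‖ := by
            refine mul_le_mul_of_nonneg_right ?_ (norm_nonneg _)
            rw [norm_star]; exact hUe k i
        _ = ‖B k l‖ := one_mul _
    rw [Matrix.mul_apply]
    refine (norm_sum_le _ _).trans ?_
    calc ∑ l, ‖(star U * B) i l * U l i‖ ≤ ∑ l, ∑ k, ‖B k l‖ := by
          refine Finset.sum_le_sum fun l _ => ?_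
          rw [norm_mul]
          calc ‖(star U * B) i l‖ * ‖U l i‖ ≤ (∑ k, ‖B k l‖) * 1 :=
                mul_le_mul (h1 l) (hUe l i) (norm_nonneg _)
                  (Finset.sum_nonneg fun _ _ => norm_nonneg _)
            _ = ∑ k, ‖B k l‖ := mul_one _
      _ = S := by rw [hS]; exact Finset.sum_comm
  rw [trace_hcfc_eq A B hA f]
  refine (norm_sum_le _ _).trans ?_
  have hεS : ∀ i : Fin N, ‖(f (hA.eigenvalues i) : ℂ) * ((star U * B * U) i i)‖ ≤ ε * S := by
    intro i
    rw [norm_mul, Complex.norm_real, Real.norm_eq_abs]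
    exact mul_le_mul (hf i) (hM i) (norm_nonneg _) ((abs_nonneg _).trans (hf i))
  calc ∑ i : Fin N, ‖(f (hA.eigenvalues i) : ℂ) * ((star U * B * U) i i)‖
      ≤ ∑ _i : Fin N, ε * S := Finset.sum_le_sum fun i _ => hεS i
    _ = N * ε * S := by rw [Finset.sum_const, Finset.card_univ, Fintype.card_fin,
        nsmul_eq_mul, mul_assoc]

open Matrix in
lemma hcfc_sub {N : ℕ} (A : Matrix (Fin N) (Fin N) ℂ) (hA : A.IsHermitian) (f g : ℝ → ℝ) :
    hA.cfc f - hA.cfc g = hA.cfc (fun x => f x - g x) := by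
  simp only [Matrix.IsHermitian.cfc, Unitary.conjStarAlgAut_apply]
  have h : (RCLike.ofReal ∘ (fun x => f x - g x) ∘ hA.eigenvalues : Fin N → ℂ)
      = fun i => (RCLike.ofReal ∘ f ∘ hA.eigenvalues) i - (RCLike.ofReal ∘ g ∘ hA.eigenvalues) i := by
    funext i; simp
  rw [h, ← Matrix.diagonal_sub]
  noncomm_ring

noncomputable def conjAlgHom {N : ℕ} (U : Matrix.unitaryGroup (Fin N) ℂ) :
    Matrix (Fin N) (Fin N) ℂ →ₐ[ℂ] Matrix (Fin N) (Fin N) ℂ where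
  toFun M := (U : Matrix (Fin N) (Fin N) ℂ) * M * star (U : Matrix (Fin N) (Fin N) ℂ)
  map_one' := by
    show (U : Matrix (Fin N) (Fin N) ℂ) * 1 * star (U : Matrix (Fin N) (Fin N) ℂ) = 1
    rw [mul_one]; exact Unitary.coe_mul_star_self U
  map_mul' M M' := by
    have h : star (U : Matrix (Fin N) (Fin N) ℂ) * U = 1 := Unitary.coe_star_mul_self U
    have : (U : Matrix (Fin N) (Fin N) ℂ) * (M * M') * star (U : Matrix (Fin N) (Fin N) ℂ)
        = (U : Matrix (Fin N) (Fin N) ℂ) * M *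
          (star (U : Matrix (Fin N) (Fin N) ℂ) * (U : Matrix (Fin N) (Fin N) ℂ)) * M' *
          star (U : Matrix (Fin N) (Fin N) ℂ) := by
      rw [h, mul_one]
      noncomm_ring
    show (U : Matrix (Fin N) (Fin N) ℂ) * (M * M') * star (U : Matrix (Fin N) (Fin N) ℂ) = _
    rw [this]
    show _ = ((U : Matrix (Fin N) (Fin N) ℂ) * M * star (U : Matrix (Fin N) (Fin N) ℂ)) *
      ((U : Matrix (Fin N) (Fin N) ℂ) * M' * star (U : Matrix (Fin N) (Fin N) ℂ))
    noncomm_ring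
  map_zero' := by simp
  map_add' M M' := by noncomm_ring
  commutes' c := by
    simp [Algebra.algebraMap_eq_smul_one, Matrix.mul_smul, Matrix.smul_mul,
      Unitary.coe_mul_star_self]

open Matrix Polynomial in
lemma hcfc_poly {N : ℕ} (A : Matrix (Fin N) (Fin N) ℂ) (hA : A.IsHermitian) (p : Polynomial ℝ) :
    hA.cfc (fun x => p.eval x) = Polynomial.aeval A (p.map (algebraMap ℝ ℂ)) := by
  have hAeq : A = conjAlgHom hA.eigenvectorUnitary
      (Matrix.diagonal (RCLike.ofReal ∘ hA.eigenvalues)) := hA.spectral_theorem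
  conv_rhs => rw [hAeq]
  rw [Polynomial.aeval_algHom_apply]
  have hdiag : Polynomial.aeval (Matrix.diagonal (RCLike.ofReal ∘ hA.eigenvalues))
        (p.map (algebraMap ℝ ℂ))
      = Matrix.diagonal (fun i => (RCLike.ofReal (p.eval (hA.eigenvalues i)) : ℂ)) := by
    have h1 := Polynomial.aeval_algHom_apply (Matrix.diagonalAlgHom (n := Fin N) (α := ℂ) ℂ)
      (RCLike.ofReal ∘ hA.eigenvalues) (p.map (algebraMap ℝ ℂ))
    simp only [Matrix.diagonalAlgHom_apply] at h1
    rw [h1, Matrix.diagonal_eq_diagonal_iff]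
    intro i
    have h2 := Polynomial.aeval_algHom_apply (Pi.evalAlgHom ℂ (fun _ : Fin N => ℂ) i)
      (RCLike.ofReal ∘ hA.eigenvalues) (p.map (algebraMap ℝ ℂ))
    simp only [Pi.evalAlgHom_apply] at h2
    rw [← h2, Function.comp_apply]
    have h3 : (RCLike.ofReal (hA.eigenvalues i) : ℂ) = algebraMap ℝ ℂ (hA.eigenvalues i) := rfl
    rw [h3, Polynomial.aeval_map_algebraMap, Polynomial.aeval_algebraMap_apply]
    simp
  rw [hdiag]
  rfl

open Polynomial in
noncomputable def polyInt (q : ℝ[X]) : ℝ[X] :=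
  q.sum fun k a => C (a / (k + 1)) * X ^ (k + 1)

open Polynomial in
lemma derivative_polyInt (q : ℝ[X]) : derivative (polyInt q) = q := by
  rw [polyInt, Polynomial.sum, map_sum]
  have h : ∀ k ∈ q.support,
      derivative (C (q.coeff k / (k + 1)) * X ^ (k + 1)) = C (q.coeff k) * X ^ k := by
    intro k _
    rw [derivative_C_mul_X_pow]
    congr 1
    congr 1
    push_cast
    field_simp
  rw [Finset.sum_congr rfl h]
  conv_rhs => rw [← q.sum_C_mul_X_pow_eq]
  rfl

open Polynomial in
lemma poly_approx (R : ℝ) (hR : 0 ≤ R) (φ : ℝ → ℝ) (hφ : ContDiff ℝ 1 φ) (ε : ℝ) (hε : 0 < ε) :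
    ∃ P : ℝ[X], (∀ x ∈ Set.Icc (-R) R, |P.eval x - φ x| ≤ R * ε) ∧
      (∀ x ∈ Set.Icc (-R) R, |(derivative P).eval x - deriv φ x| ≤ ε) := by
  obtain ⟨q, hq⟩ := exists_polynomial_near_of_continuousOn (-R) R (deriv φ)
    ((hφ.continuous_deriv le_rfl).continuousOn) ε hε
  set P := polyInt q + C (φ 0 - (polyInt q).eval 0) with hP
  have hP' : derivative P = q := by
    rw [hP, map_add, derivative_C, add_zero, derivative_polyInt]
  refine ⟨P, ?_, ?_⟩
  · intro x hx
    set g := fun y => P.eval y - φ y with hg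
    have hgd : ∀ y ∈ Set.Icc (-R) R,
        HasDerivWithinAt g (q.eval y - deriv φ y) (Set.Icc (-R) R) y := by
      intro y _
      have h1 : HasDerivAt (fun y => P.eval y) (q.eval y) y := by
        have := P.hasDerivAt y
        rwa [hP'] at this
      have h2 : HasDerivAt φ (deriv φ y) y :=
        ((hφ.differentiable one_ne_zero) y).hasDerivAt
      exact (h1.sub h2).hasDerivWithinAt
    have hbound : ∀ y ∈ Set.Icc (-R) R, ‖q.eval y - deriv φ y‖ ≤ ε := by
      intro y hy
      rw [Real.norm_eq_abs]
      exact (hq y hy).le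
    have h0 : (0 : ℝ) ∈ Set.Icc (-R) R := by constructor <;> linarith
    have key := Convex.norm_image_sub_le_of_norm_hasDerivWithin_le hgd hbound
      (convex_Icc (-R) R) h0 hx
    have hg0 : g 0 = 0 := by simp [hg, hP]
    rw [hg0, sub_zero, sub_zero, Real.norm_eq_abs, Real.norm_eq_abs] at key
    have hxR : |x| ≤ R := abs_le.mpr ⟨hx.1, hx.2⟩
    calc |P.eval x - φ x| = |g x| := rfl
      _ ≤ ε * |x| := key
      _ ≤ ε * R := by nlinarith
      _ = R * ε := mul_comm _ _
  · intro x hx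
    rw [hP']
    exact (hq x hx).le

lemma sum_norm_one_entries (N : ℕ) :
    (∑ k : Fin N, ∑ l : Fin N, ‖(1 : Matrix (Fin N) (Fin N) ℂ) k l‖) = N := by
  classical
  have h : ∀ k : Fin N, (∑ l : Fin N, ‖(1 : Matrix (Fin N) (Fin N) ℂ) k l‖) = 1 := by
    intro k
    rw [Finset.sum_eq_single k]
    · simp [Matrix.one_apply]
    · intro l _ hl
      simp [Matrix.one_apply, (Ne.symm hl)]
    · simp
  rw [Finset.sum_congr rfl fun k _ => h k]
  simp

attribute [local instance] Matrix.normedAddCommGroup Matrix.normedSpace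

section Deriv
variable {N : ℕ}

noncomputable def mulCLM (N : ℕ) : Matrix (Fin N) (Fin N) ℂ →L[ℝ]
    Matrix (Fin N) (Fin N) ℂ →L[ℝ] Matrix (Fin N) (Fin N) ℂ := by
  haveI : FiniteDimensional ℝ (Matrix (Fin N) (Fin N) ℂ) := Module.Finite.trans ℂ _
  exact LinearMap.toContinuousLinearMap
    { toFun := fun X => LinearMap.toContinuousLinearMap (LinearMap.mulLeft ℝ X)
      map_add' := by
        intro X Y; ext M; simp [LinearMap.mulLeft_apply, add_mul]
      map_smul' := by
        intro c X; ext M; simp [LinearMap.mulLeft_apply, smul_mul_assoc] }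

@[simp] lemma mulCLM_apply (X Y : Matrix (Fin N) (Fin N) ℂ) : mulCLM N X Y = X * Y := rfl

noncomputable def traceCLM (N : ℕ) : Matrix (Fin N) (Fin N) ℂ →L[ℝ] ℂ := by
  haveI : FiniteDimensional ℝ (Matrix (Fin N) (Fin N) ℂ) := Module.Finite.trans ℂ _
  exact LinearMap.toContinuousLinearMap
    ((Matrix.traceLinearMap (Fin N) ℂ ℂ).restrictScalars ℝ)

@[simp] lemma traceCLM_apply (X : Matrix (Fin N) (Fin N) ℂ) : traceCLM N X = Matrix.trace X := rfl

lemma HasDerivAt.matrix_trace {M : ℝ → Matrix (Fin N) (Fin N) ℂ} {Md : Matrix (Fin N) (Fin N) ℂ}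
    {t : ℝ} (h : HasDerivAt M Md t) :
    HasDerivAt (fun s => Matrix.trace (M s)) (Matrix.trace Md) t := by
  exact ((traceCLM N).hasFDerivAt (x := M t)).comp_hasDerivAt t h

lemma HasDerivAt.matrix_mul {M B : ℝ → Matrix (Fin N) (Fin N) ℂ} {Md Bd : Matrix (Fin N) (Fin N) ℂ}
    {t : ℝ} (hM : HasDerivAt M Md t) (hB : HasDerivAt B Bd t) :
    HasDerivAt (fun s => M s * B s) (Md * B t + M t * Bd) t := by
  letI : NormedAddCommGroup (Matrix (Fin N) (Fin N) ℂ →L[ℝ] Matrix (Fin N) (Fin N) ℂ) :=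
    ContinuousLinearMap.toNormedAddCommGroup
  letI : NormedSpace ℝ (Matrix (Fin N) (Fin N) ℂ →L[ℝ] Matrix (Fin N) (Fin N) ℂ) :=
    ContinuousLinearMap.toNormedSpace
  have h1 : HasDerivAt (fun s => mulCLM N (M s)) (mulCLM N Md) t :=
    (mulCLM N).hasFDerivAt.comp_hasDerivAt t hM
  have := h1.clm_apply hB
  exact this

lemma HasDerivAt.matrix_pow {M : ℝ → Matrix (Fin N) (Fin N) ℂ} {Md : Matrix (Fin N) (Fin N) ℂ}
    {t : ℝ} (hM : HasDerivAt M Md t) (n : ℕ) :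
    HasDerivAt (fun s => M s ^ (n + 1))
      (∑ k ∈ Finset.range (n + 1), M t ^ k * Md * M t ^ (n - k)) t := by
  induction n with
  | zero => simpa using hM
  | succ n ih =>
    have h2 : HasDerivAt (fun s => M s ^ (n + 1) * M s)
        ((∑ k ∈ Finset.range (n + 1), M t ^ k * Md * M t ^ (n - k)) * M t
          + M t ^ (n + 1) * Md) t := ih.matrix_mul hM
    have h3 : (fun s => M s ^ (n + 1) * M s) = fun s => M s ^ (n + 2) := by
      funext s; rw [← pow_succ]
    rw [h3] at h2
    convert h2 using 1
    rw [Finset.sum_range_succ]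
    rw [Finset.sum_mul]
    congr 1
    · refine Finset.sum_congr rfl fun k hk => ?_
      have hk' : k ≤ n := Nat.lt_succ_iff.mp (Finset.mem_range.mp hk)
      rw [mul_assoc, mul_assoc, mul_assoc, ← pow_succ]
      have : n - k + 1 = n + 1 - k := by omega
      rw [this]
    · simp

open Polynomial in
lemma trace_aeval_hasDerivAt {M : ℝ → Matrix (Fin N) (Fin N) ℂ} {Md : Matrix (Fin N) (Fin N) ℂ}
    {t : ℝ} (hM : HasDerivAt M Md t) (q : Polynomial ℂ) :
    HasDerivAt (fun s => Matrix.trace (Polynomial.aeval (M s) q))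
      (Matrix.trace (Polynomial.aeval (M t) (Polynomial.derivative q) * Md)) t := by
  induction q using Polynomial.induction_on with
  | C c =>
    simp only [aeval_C, derivative_C, map_zero, Matrix.zero_mul, Matrix.trace_zero]
    exact hasDerivAt_const t _
  | add p q hp hq =>
    simp only [map_add, Matrix.trace_add, Matrix.add_mul]
    exact hp.add hq
  | monomial n c _ =>
    have h1 : HasDerivAt (fun s => M s ^ (n + 1))
        (∑ k ∈ Finset.range (n + 1), M t ^ k * Md * M t ^ (n - k)) t := hM.matrix_pow n
    have h2 := h1.matrix_trace
    have h3 : Matrix.trace (∑ k ∈ Finset.range (n + 1), M t ^ k * Md * M t ^ (n - k))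
        = ((n : ℂ) + 1) * Matrix.trace (M t ^ n * Md) := by
      rw [Matrix.trace_sum]
      have : ∀ k ∈ Finset.range (n + 1),
          Matrix.trace (M t ^ k * Md * M t ^ (n - k)) = Matrix.trace (M t ^ n * Md) := by
        intro k hk
        have hk' : k ≤ n := Nat.lt_succ_iff.mp (Finset.mem_range.mp hk)
        have hnk : n - k + k = n := by omega
        rw [Matrix.trace_mul_cycle, ← pow_add, hnk]
      rw [Finset.sum_congr rfl this, Finset.sum_const, Finset.card_range, nsmul_eq_mul]
      push_cast
      ring
    rw [h3] at h2
    have h4 := h2.const_mul c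
    have hfun : (fun s => c * Matrix.trace (M s ^ (n + 1)))
        = fun s => Matrix.trace (Polynomial.aeval (M s) (C c * X ^ (n + 1))) := by
      funext s
      rw [map_mul, aeval_C, aeval_X_pow, Algebra.algebraMap_eq_smul_one, smul_mul_assoc,
        one_mul, Matrix.trace_smul, smul_eq_mul]
    rw [hfun] at h4
    convert h4 using 1
    case e'_4 => rfl
    rw [derivative_C_mul_X_pow]
    rw [map_mul, aeval_C, aeval_X_pow, Algebra.algebraMap_eq_smul_one, smul_mul_assoc,
      one_mul, Matrix.smul_mul, Matrix.trace_smul, smul_eq_mul]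
    push_cast
    ring

noncomputable def entryCLM (N : ℕ) (k l : Fin N) : Matrix (Fin N) (Fin N) ℂ →L[ℝ] ℂ := by
  haveI : FiniteDimensional ℝ (Matrix (Fin N) (Fin N) ℂ) := Module.Finite.trans ℂ _
  exact LinearMap.toContinuousLinearMap
    { toFun := fun M => M k l
      map_add' := fun _ _ => rfl
      map_smul' := fun _ _ => rfl }

@[simp] lemma entryCLM_apply {N : ℕ} (k l : Fin N) (M : Matrix (Fin N) (Fin N) ℂ) :
    entryCLM N k l M = M k l := rfl

lemma ContinuousOn.matrix_mul'' {N : ℕ} {X Y : ℝ → Matrix (Fin N) (Fin N) ℂ} {s : Set ℝ}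
    (hX : ContinuousOn X s) (hY : ContinuousOn Y s) :
    ContinuousOn (fun t => X t * Y t) s := by
  have hcont : Continuous fun p : Matrix (Fin N) (Fin N) ℂ × Matrix (Fin N) (Fin N) ℂ =>
      mulCLM N p.1 p.2 := (mulCLM N).isBoundedBilinearMap.continuous
  have := hcont.comp_continuousOn (hX.prodMk hY)
  exact this

lemma ContinuousOn.matrix_pow' {N : ℕ} {X : ℝ → Matrix (Fin N) (Fin N) ℂ} {s : Set ℝ}
    (hX : ContinuousOn X s) (i : ℕ) :
    ContinuousOn (fun t => X t ^ i) s := by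
  induction i with
  | zero => simpa using continuousOn_const
  | succ i ih =>
    have := ih.matrix_mul'' hX
    simpa [pow_succ] using this

open Polynomial in
lemma ContinuousOn.matrix_aeval' {N : ℕ} {X : ℝ → Matrix (Fin N) (Fin N) ℂ} {s : Set ℝ}
    (hX : ContinuousOn X s) (q : Polynomial ℂ) :
    ContinuousOn (fun t => Polynomial.aeval (X t) q) s := by
  have h : ∀ t, Polynomial.aeval (X t) q
      = ∑ i ∈ Finset.range (q.natDegree + 1), q.coeff i • X t ^ i := fun t =>
    Polynomial.aeval_eq_sum_range _
  simp only [h]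
  exact continuousOn_finset_sum _ fun i _ => by have := (hX.matrix_pow' i).const_smul (q.coeff i); exact this

end Deriv

open Topology in
/-- Let `A : I → M_N(ℂ)` be a `C¹` function on an open interval `I = (a,b)`
taking self-adjoint values, with derivative `A'`, and let `φ ∈ C¹(ℝ)`.  Then
`t ↦ tr_N[φ(A(t))]` is `C¹` on `I` with derivative `tr_N[φ'(A(t))·A'(t)]`, where `φ(A(t))` is
defined via the continuous functional calculus and `tr_N` is the normalized trace. -/
theorem stmt8 (N : ℕ) (hN : 0 < N) (a b : ℝ)
    (A A' : ℝ → Matrix (Fin N) (Fin N) ℂ)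
    (hherm : ∀ t ∈ Set.Ioo a b, (A t).IsHermitian)
    (hA : ∀ t ∈ Set.Ioo a b, HasDerivAt A (A' t) t)
    (hA'cont : ContinuousOn A' (Set.Ioo a b))
    (φ : ℝ → ℝ) (hφ : ContDiff ℝ 1 φ) :
    (∀ t ∈ Set.Ioo a b,
      HasDerivAt (fun s => (N : ℂ)⁻¹ * Matrix.trace (cfc φ (A s)))
        ((N : ℂ)⁻¹ * Matrix.trace (cfc (deriv φ) (A t) * A' t)) t) ∧
    ContinuousOn (fun t => (N : ℂ)⁻¹ * Matrix.trace (cfc (deriv φ) (A t) * A' t))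
      (Set.Ioo a b) := by
  classical
  have hAcont : ContinuousOn A (Set.Ioo a b) := fun s hs =>
    ((hA s hs).continuousAt).continuousWithinAt
  have key : ∀ t₀ ∈ Set.Ioo a b,
      HasDerivAt (fun s => Matrix.trace (cfc φ (A s)))
        (Matrix.trace (cfc (deriv φ) (A t₀) * A' t₀)) t₀ ∧
      ContinuousAt (fun s => Matrix.trace (cfc (deriv φ) (A s) * A' s)) t₀ := by
    intro t₀ ht₀
    obtain ⟨δ, hδ0, hδ⟩ := Metric.isOpen_iff.mp isOpen_Ioo t₀ ht₀
    have hr0 : 0 < δ / 2 := by linarith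
    have hKsub : Metric.closedBall t₀ (δ / 2) ⊆ Set.Ioo a b :=
      (Metric.closedBall_subset_ball (by linarith)).trans hδ
    have hsK : Metric.ball t₀ (δ / 2) ⊆ Metric.closedBall t₀ (δ / 2) :=
      Metric.ball_subset_closedBall
    have ht₀K : t₀ ∈ Metric.closedBall t₀ (δ / 2) := Metric.mem_closedBall_self hr0.le
    have ht₀s : t₀ ∈ Metric.ball t₀ (δ / 2) := Metric.mem_ball_self hr0
    have hg1 : ContinuousOn (fun s => ∑ k, ∑ l, ‖A s k l‖) (Metric.closedBall t₀ (δ / 2)) := by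
      refine continuousOn_finset_sum _ fun k _ => continuousOn_finset_sum _ fun l _ => ?_
      exact (((entryCLM N k l).continuous.comp_continuousOn (hAcont.mono hKsub))).norm
    have hg2 : ContinuousOn (fun s => ∑ k, ∑ l, ‖A' s k l‖) (Metric.closedBall t₀ (δ / 2)) := by
      refine continuousOn_finset_sum _ fun k _ => continuousOn_finset_sum _ fun l _ => ?_
      exact (((entryCLM N k l).continuous.comp_continuousOn (hA'cont.mono hKsub))).norm
    obtain ⟨z1, hz1K, hz1⟩ := (isCompact_closedBall t₀ (δ / 2)).exists_isMaxOn ⟨t₀, ht₀K⟩ hg1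
    obtain ⟨z2, hz2K, hz2⟩ := (isCompact_closedBall t₀ (δ / 2)).exists_isMaxOn ⟨t₀, ht₀K⟩ hg2
    set R := ∑ k, ∑ l, ‖A z1 k l‖ with hRdef
    set R2 := ∑ k, ∑ l, ‖A' z2 k l‖ with hR2def
    have hR0 : 0 ≤ R :=
      le_trans (Finset.sum_nonneg fun _ _ => Finset.sum_nonneg fun _ _ => norm_nonneg _)
        (hz1 ht₀K)
    have hR20 : 0 ≤ R2 :=
      le_trans (Finset.sum_nonneg fun _ _ => Finset.sum_nonneg fun _ _ => norm_nonneg _)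
        (hz2 ht₀K)
    have heig : ∀ s (hs : s ∈ Metric.closedBall t₀ (δ / 2)), ∀ i,
        (hherm s (hKsub hs)).eigenvalues i ∈ Set.Icc (-R) R := by
      intro s hs i
      rw [Set.mem_Icc, ← abs_le]
      exact (eig_abs_le (A s) (hherm s (hKsub hs)) i).trans (hz1 hs)
    have happ : ∀ n : ℕ, ∃ P : Polynomial ℝ,
        (∀ x ∈ Set.Icc (-R) R, |P.eval x - φ x| ≤ R * (1 / (n + 1))) ∧
        (∀ x ∈ Set.Icc (-R) R,
          |(Polynomial.derivative P).eval x - deriv φ x| ≤ 1 / (n + 1)) :=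
      fun n => poly_approx R hR0 φ hφ _ (by positivity)
    choose P hP1 hP2 using happ
    have hFG : ∀ n : ℕ, ∀ s ∈ Metric.closedBall t₀ (δ / 2),
        ‖Matrix.trace (Polynomial.aeval (A s) ((P n).map (algebraMap ℝ ℂ)))
          - Matrix.trace (cfc φ (A s))‖ ≤ ((N : ℝ) * R * N) * (1 / (n + 1)) := by
      intro n s hs
      have hH := hherm s (hKsub hs)
      have e1 : Matrix.trace (Polynomial.aeval (A s) ((P n).map (algebraMap ℝ ℂ)))
          = Matrix.trace (hH.cfc fun x => (P n).eval x) := by rw [hcfc_poly]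
      have e2 : Matrix.trace (cfc φ (A s)) = Matrix.trace (hH.cfc φ) := by
        rw [hH.cfc_eq]
      rw [e1, e2, ← Matrix.trace_sub, hcfc_sub]
      have hb := trace_hcfc_bound (A s) 1 hH (fun x => (P n).eval x - φ x)
        (R * (1 / (n + 1))) (fun i => hP1 n _ (heig s hs i))
      rw [mul_one] at hb
      calc ‖Matrix.trace (hH.cfc fun x => (P n).eval x - φ x)‖
          ≤ (N : ℝ) * (R * (1 / (n + 1))) * ∑ k, ∑ l, ‖(1 : Matrix (Fin N) (Fin N) ℂ) k l‖ := hb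
        _ = ((N : ℝ) * R * N) * (1 / (n + 1)) := by rw [sum_norm_one_entries]; ring
    have hF'G' : ∀ n : ℕ, ∀ s ∈ Metric.closedBall t₀ (δ / 2),
        ‖Matrix.trace (cfc (deriv φ) (A s) * A' s)
          - Matrix.trace (Polynomial.aeval (A s)
              ((Polynomial.derivative (P n)).map (algebraMap ℝ ℂ)) * A' s)‖
          ≤ ((N : ℝ) * R2) * (1 / (n + 1)) := by
      intro n s hs
      have hH := hherm s (hKsub hs)
      have e1 : cfc (deriv φ) (A s) = hH.cfc (deriv φ) := hH.cfc_eq _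
      have e2 : Polynomial.aeval (A s) ((Polynomial.derivative (P n)).map (algebraMap ℝ ℂ))
          = hH.cfc (fun x => (Polynomial.derivative (P n)).eval x) :=
        (hcfc_poly _ hH _).symm
      rw [e1, e2, ← Matrix.trace_sub, ← Matrix.sub_mul, hcfc_sub]
      have hb := trace_hcfc_bound (A s) (A' s) hH
        (fun x => deriv φ x - (Polynomial.derivative (P n)).eval x) (1 / (n + 1))
        (fun i => by rw [abs_sub_comm]; exact hP2 n _ (heig s hs i))
      calc ‖Matrix.trace
            (hH.cfc (fun x => deriv φ x - (Polynomial.derivative (P n)).eval x) * A' s)‖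
          ≤ (N : ℝ) * (1 / (n + 1)) * ∑ k, ∑ l, ‖A' s k l‖ := hb
        _ ≤ (N : ℝ) * (1 / (n + 1)) * R2 := by
            refine mul_le_mul_of_nonneg_left (hz2 hs) ?_
            positivity
        _ = ((N : ℝ) * R2) * (1 / (n + 1)) := by ring
    have hFderiv : ∀ n : ℕ, ∀ x ∈ Metric.ball t₀ (δ / 2),
        HasDerivAt (fun s => Matrix.trace (Polynomial.aeval (A s) ((P n).map (algebraMap ℝ ℂ))))
          (Matrix.trace (Polynomial.aeval (A x)
            ((Polynomial.derivative (P n)).map (algebraMap ℝ ℂ)) * A' x)) x := by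
      intro n x hx
      have hx' : x ∈ Set.Ioo a b := hKsub (hsK hx)
      have h := trace_aeval_hasDerivAt (hA x hx') ((P n).map (algebraMap ℝ ℂ))
      rwa [Polynomial.derivative_map] at h
    have hunif : TendstoUniformlyOn
        (fun (n : ℕ) s => Matrix.trace (Polynomial.aeval (A s)
          ((Polynomial.derivative (P n)).map (algebraMap ℝ ℂ)) * A' s))
        (fun s => Matrix.trace (cfc (deriv φ) (A s) * A' s)) Filter.atTop
        (Metric.ball t₀ (δ / 2)) := by
      rw [Metric.tendstoUniformlyOn_iff]
      intro ε hε
      have hlim : Filter.Tendsto (fun n : ℕ => ((N : ℝ) * R2) * (1 / (n + 1)))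
          Filter.atTop (𝓝 0) := by
        have h0 := tendsto_one_div_add_atTop_nhds_zero_nat (𝕜 := ℝ)
        simpa using h0.const_mul ((N : ℝ) * R2)
      filter_upwards [hlim.eventually_lt_const hε] with n hn s hs
      rw [dist_eq_norm]
      exact lt_of_le_of_lt (hF'G' n s (hsK hs)) hn
    have hptw : ∀ x ∈ Metric.ball t₀ (δ / 2),
        Filter.Tendsto
          (fun n => Matrix.trace (Polynomial.aeval (A x) ((P n).map (algebraMap ℝ ℂ))))
          Filter.atTop (𝓝 (Matrix.trace (cfc φ (A x)))) := by
      intro x hx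
      rw [tendsto_iff_norm_sub_tendsto_zero]
      have hlim : Filter.Tendsto (fun n : ℕ => ((N : ℝ) * R * N) * (1 / (n + 1)))
          Filter.atTop (𝓝 0) := by
        have h0 := tendsto_one_div_add_atTop_nhds_zero_nat (𝕜 := ℝ)
        simpa using h0.const_mul ((N : ℝ) * R * N)
      exact squeeze_zero (fun n => norm_nonneg _) (fun n => hFG n x (hsK hx)) hlim
    have hmain := hasDerivAt_of_tendstoUniformlyOn Metric.isOpen_ball hunif
      (Filter.Eventually.of_forall hFderiv) hptw ht₀s
    refine ⟨hmain, ?_⟩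
    have hContF' : ∀ n : ℕ, ContinuousOn
        (fun s => Matrix.trace (Polynomial.aeval (A s)
          ((Polynomial.derivative (P n)).map (algebraMap ℝ ℂ)) * A' s))
        (Metric.ball t₀ (δ / 2)) := by
      intro n
      have hXA : ContinuousOn A (Metric.ball t₀ (δ / 2)) :=
        hAcont.mono fun x hx => hKsub (hsK hx)
      have hXA' : ContinuousOn A' (Metric.ball t₀ (δ / 2)) :=
        hA'cont.mono fun x hx => hKsub (hsK hx)
      have h1 := (hXA.matrix_aeval' ((Polynomial.derivative (P n)).map (algebraMap ℝ ℂ))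
        ).matrix_mul'' hXA'
      have h2 := (traceCLM N).continuous.comp_continuousOn h1
      exact h2
    have hGcont := hunif.continuousOn (Filter.Eventually.of_forall (f := Filter.atTop) hContF').frequently
    exact hGcont.continuousAt (Metric.isOpen_ball.mem_nhds ht₀s)
  constructor
  · intro t ht
    exact HasDerivAt.const_mul _ (key t ht).1
  · intro t ht
    exact (ContinuousAt.continuousWithinAt (continuousAt_const.mul (key t ht).2))
end

section
/- Let A, B be normal elements of a C*-algebra (or normal N×N matrices). Then the Hausdorff distance between their spectra satisfies d_H(sp(A), sp(B)) ≤ ‖A - B‖. -/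
open scoped NNReal ENNReal

lemma aux_isStarNormal_algebraMap_sub {A : Type*} [Ring A] [StarRing A] [Algebra ℂ A] [StarModule ℂ A]
    (r : ℂ) (b : A) (hb : IsStarNormal b) : IsStarNormal (algebraMap ℂ A r - b) := by
  constructor
  have h1 : star (algebraMap ℂ A r - b) = algebraMap ℂ A (star r) - star b := by
    rw [star_sub, algebraMap_star_comm]
  rw [h1]
  have hc : Commute (star b) b := hb.star_comm_self
  exact Commute.sub_left (Algebra.commute_algebraMap_left _ _)
    (Commute.sub_right ((Algebra.commute_algebraMap_left _ _).symm) hc)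

lemma aux_isStarNormal_inv {A : Type*} [Ring A] [StarRing A] (u : Aˣ)
    (hu : IsStarNormal (u : A)) : IsStarNormal ((↑u⁻¹ : A)) := by
  constructor
  have h : Commute (star u) u := by
    have := hu.star_comm_self
    unfold Commute SemiconjBy at this ⊢
    ext
    simpa using this
  have h2 := h.inv_inv
  have h3 : ((star u)⁻¹ : Aˣ) = star (u⁻¹) := by
    ext
    simp [Units.coe_star_inv, Units.coe_star]
  rw [h3] at h2
  unfold Commute SemiconjBy at h2 ⊢
  have := congrArg (Units.val) h2
  simpa [Units.coe_star] using this

lemma aux_key {A : Type*} [CStarAlgebra A] (a b : A) (hb : IsStarNormal b)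
    {lam : ℂ} (hlam : lam ∈ spectrum ℂ a) :
    ∃ μ ∈ spectrum ℂ b, dist lam μ ≤ ‖a - b‖ := by
  have hnt : Nontrivial A := by
    rcases subsingleton_or_nontrivial A with hs | hnt
    · exact absurd (isUnit_of_subsingleton _) (spectrum.mem_iff.mp hlam)
    · exact hnt
  rcases eq_or_lt_of_le (norm_nonneg (a - b)) with h0 | hpos
  · have hab : a = b := by rwa [eq_comm, norm_eq_zero, sub_eq_zero] at h0
    exact ⟨lam, hab ▸ hlam, by simp⟩
  by_contra hcon
  push_neg at hcon
  -- hcon : ∀ μ ∈ spectrum ℂ b, ‖a - b‖ < dist lam μ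
  have hbne : (spectrum ℂ b).Nonempty := spectrum.nonempty b
  have hbcpt : IsCompact (spectrum ℂ b) := spectrum.isCompact b
  obtain ⟨μ₀, hμ₀, hd⟩ := hbcpt.exists_infDist_eq_dist hbne lam
  set d : ℝ := Metric.infDist lam (spectrum ℂ b) with hddef
  have hdgt : ‖a - b‖ < d := hd ▸ hcon μ₀ hμ₀
  have hdpos : 0 < d := lt_of_le_of_lt (norm_nonneg _) hdgt
  have hlam_nb : lam ∉ spectrum ℂ b := fun hmem => by
    have h0 : d = 0 := Metric.infDist_zero_of_mem hmem
    linarith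
  have hunit : IsUnit (algebraMap ℂ A lam - b) := by
    rwa [spectrum.notMem_iff] at hlam_nb
  obtain ⟨u, hu⟩ := hunit
  have hun : IsStarNormal (u : A) := hu ▸ aux_isStarNormal_algebraMap_sub lam b hb
  have huin : IsStarNormal ((↑u⁻¹ : A)) := aux_isStarNormal_inv u hun
  -- bound the norm of the inverse by d⁻¹ via the spectral radius
  have hsr : spectralRadius ℂ ((↑u⁻¹ : A)) ≤ ENNReal.ofReal d⁻¹ := by
    rw [spectralRadius]
    refine iSup₂_le fun z hz => ?_
    rw [← spectrum.map_inv, Set.mem_inv] at hz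
    rw [hu] at hz
    rw [← spectrum.singleton_sub_eq] at hz
    obtain ⟨x, hx, y, hy, hxy⟩ := Set.mem_sub.mp hz
    rw [Set.mem_singleton_iff] at hx
    rw [hx] at hxy
    have hzval : z = (lam - y)⁻¹ := by rw [hxy, inv_inv]
    have hdle : d ≤ ‖lam - y‖ := by
      have h := Metric.infDist_le_dist_of_mem (x := lam) hy
      rwa [dist_eq_norm] at h
    have : ‖z‖ ≤ d⁻¹ := by
      rw [hzval, norm_inv]
      exact inv_anti₀ hdpos hdle
    calc (‖z‖₊ : ℝ≥0∞) = ENNReal.ofReal ‖z‖ := (ofReal_norm z).symm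
      _ ≤ ENNReal.ofReal d⁻¹ := ENNReal.ofReal_le_ofReal this
  have hnorm_inv : ‖(↑u⁻¹ : A)‖ ≤ d⁻¹ := by
    have := huin.spectralRadius_eq_nnnorm ▸ hsr
    rw [show ((‖(↑u⁻¹ : A)‖₊ : ℝ≥0∞)) = ENNReal.ofReal ‖(↑u⁻¹ : A)‖ from (ofReal_norm _).symm] at this
    rwa [ENNReal.ofReal_le_ofReal_iff (by positivity)] at this
  have hlt : ‖(↑u⁻¹ : A) * (a - b)‖ < 1 := by
    calc ‖(↑u⁻¹ : A) * (a - b)‖ ≤ ‖(↑u⁻¹ : A)‖ * ‖a - b‖ := norm_mul_le _ _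
      _ ≤ d⁻¹ * ‖a - b‖ := by
          apply mul_le_mul_of_nonneg_right hnorm_inv (norm_nonneg _)
      _ < d⁻¹ * d := by
          apply mul_lt_mul_of_pos_left hdgt (by positivity)
      _ = 1 := inv_mul_cancel₀ (ne_of_gt hdpos)
  have hunit2 : IsUnit ((1 : A) - (↑u⁻¹ : A) * (a - b)) := (Units.oneSub _ hlt).isUnit
  have : IsUnit (algebraMap ℂ A lam - a) := by
    have hcalc : (↑u : A) * ((1 : A) - (↑u⁻¹ : A) * (a - b)) = algebraMap ℂ A lam - a := by
      rw [mul_sub, mul_one, ← mul_assoc, Units.mul_inv, one_mul, hu]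
      abel
    exact hcalc ▸ (u.isUnit.mul hunit2)
  exact (spectrum.mem_iff.mp hlam) this

/-- For normal `N×N` complex matrices `A, B`, the Hausdorff distance between
their spectra satisfies `d_H(sp(A), sp(B)) ≤ ‖A - B‖` (operator norm). -/
theorem stmt11 (N : ℕ) (A B : Matrix (Fin N) (Fin N) ℂ)
    (hA : IsStarNormal A) (hB : IsStarNormal B) :
    Metric.hausdorffDist (spectrum ℂ A) (spectrum ℂ B) ≤
      ‖Matrix.toEuclideanCLM (𝕜 := ℂ) (A - B)‖ := by
  set e := Matrix.toEuclideanCLM (n := Fin N) (𝕜 := ℂ)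
  have hspecA : spectrum ℂ A = spectrum ℂ (e A) :=
    (AlgEquiv.spectrum_eq e A).symm
  have hspecB : spectrum ℂ B = spectrum ℂ (e B) :=
    (AlgEquiv.spectrum_eq e B).symm
  have hnA : IsStarNormal (e A) := by
    constructor
    have := hA.star_comm_self
    rw [Commute, SemiconjBy] at this ⊢
    rw [← map_star, ← map_mul, ← map_mul, this]
  have hnB : IsStarNormal (e B) := by
    constructor
    have := hB.star_comm_self
    rw [Commute, SemiconjBy] at this ⊢
    rw [← map_star, ← map_mul, ← map_mul, this]
  have hsub : e (A - B) = e A - e B := map_sub e A B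
  rw [hspecA, hspecB, hsub]
  apply Metric.hausdorffDist_le_of_mem_dist (norm_nonneg _)
  · intro x hx
    exact aux_key (e A) (e B) hnB hx
  · intro y hy
    obtain ⟨μ, hμ, hd⟩ := aux_key (e B) (e A) hnA hy
    exact ⟨μ, hμ, by rwa [norm_sub_rev] at hd⟩
end
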